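/- Let a > 0 and s ∈ (0, 1/2), and let I = [0, a] ⊂ ℝ. Then the Gagliardo double integral of the indicator function of I is given exactly by ∫_ℝ ∫_ℝ |𝟙_I(x) − 𝟙_I(y)|² / |x − y|^{1+2s} dy dx = 2 a^{1−2s} / (s (1 − 2s)). In particular this quantity is finite. -/

import Mathlib

open MeasureTheory Set Real Filter Topology ENNReal

lemma aux_Ioi {r : ℝ} (hr : 0 < r) {x b : ℝ} (hxb : x < b) :
    IntegrableOn (fun y : ℝ => (y - x) ^ (-(1+r))) (Ioi b) ∧
    ∫ y in Ioi b, (y - x) ^ (-(1+r)) = (b - x) ^ (-r) / r := by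
  have hderiv : ∀ y ∈ Ici b, HasDerivAt (fun y : ℝ => -(y - x) ^ (-r) / r)
      ((y - x) ^ (-(1+r))) y := by
    intro y hy
    have hpos : 0 < y - x := by simp only [mem_Ici] at hy; linarith
    have h1 : HasDerivAt (fun y : ℝ => (y - x) ^ (-r)) ((-r) * (y - x) ^ (-r - 1) * 1) y := by
      have := (Real.hasDerivAt_rpow_const (p := -r) (Or.inl hpos.ne')).comp y ((hasDerivAt_id y).sub_const x)
      exact this
    have h2 := (h1.neg).div_const r
    have e : (-(-r * (y - x) ^ (-r - 1) * 1) / r) = (y - x) ^ (-(1+r)) := by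
      have hr' := hr.ne'
      rw [show -r - 1 = -(1+r) by ring]
      field_simp
    rw [← e]; exact h2
  have hnn : ∀ y ∈ Ioi b, 0 ≤ (y - x) ^ (-(1+r)) := fun y _ => rpow_nonneg (by simp at *; linarith) _
  have htend : Tendsto (fun y : ℝ => -(y - x) ^ (-r) / r) atTop (𝓝 0) := by
    have h0 : Tendsto (fun y : ℝ => (y - x) ^ (-r)) atTop (𝓝 0) := by
      apply (tendsto_rpow_neg_atTop hr).comp
      exact tendsto_atTop_add_const_right atTop (-x) tendsto_id |>.congr (fun y => by simp [sub_eq_add_neg, add_comm])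
    simpa using (h0.neg).div_const r
  refine ⟨integrableOn_Ioi_deriv_of_nonneg' hderiv hnn htend, ?_⟩
  rw [integral_Ioi_of_hasDerivAt_of_nonneg' hderiv hnn htend]
  ring

lemma aux_Iio {r : ℝ} (hr : 0 < r) {x b : ℝ} (hbx : b < x) :
    IntegrableOn (fun y : ℝ => (x - y) ^ (-(1+r))) (Iio b) ∧
    ∫ y in Iio b, (x - y) ^ (-(1+r)) = (x - b) ^ (-r) / r := by
  have base := aux_Ioi hr (show -x < -b by linarith)
  have hres : (volume : Measure ℝ).restrict (Iio b) = volume.restrict (Iic b) :=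
    Measure.restrict_congr_set Iio_ae_eq_Iic
  have heq : ∀ y : ℝ, (-y - -x) ^ (-(1+r)) = (x - y) ^ (-(1+r)) := by
    intro y; ring_nf
  constructor
  · have h1 := (MeasurePreserving.integrableOn_comp_preimage
      (Measure.measurePreserving_neg (volume : Measure ℝ))
      (Homeomorph.neg ℝ).measurableEmbedding).2 base.1
    have hpre : (Neg.neg : ℝ → ℝ) ⁻¹' (Ioi (-b)) = Iio b := by ext y; simp
    rw [hpre] at h1
    exact h1.congr_fun (fun y _ => heq y) measurableSet_Iio
  · have h2 := integral_comp_neg_Iic b (fun u : ℝ => (u - -x) ^ (-(1+r)))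
    calc ∫ y in Iio b, (x - y) ^ (-(1+r))
        = ∫ y in Iic b, (x - y) ^ (-(1+r)) := by rw [show (volume:Measure ℝ).restrict (Iio b) = _ from hres]
      _ = ∫ y in Iic b, (-y - -x) ^ (-(1+r)) := by congr 1; ext y; rw [heq]
      _ = (x - b) ^ (-r) / r := by rw [h2, base.2]; congr 2 <;> ring

lemma aux_Ioo {r a : ℝ} (hr0 : 0 < r) (hr1 : r < 1) (ha : 0 < a) :
    IntegrableOn (fun x : ℝ => (x ^ (-r) + (a - x) ^ (-r)) / r) (Ioo 0 a) ∧
    ∫ x in Ioo 0 a, (x ^ (-r) + (a - x) ^ (-r)) / r = 2 * a ^ (1 - r) / (r * (1 - r)) := by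
  have h1 : IntervalIntegrable (fun x : ℝ => x ^ (-r)) volume 0 a :=
    intervalIntegral.intervalIntegrable_rpow' (by linarith)
  have h2 : IntervalIntegrable (fun x : ℝ => (a - x) ^ (-r)) volume 0 a := by
    have := (intervalIntegral.intervalIntegrable_rpow'
      (a := a - 0) (b := a - a) (by linarith : (-1:ℝ) < -r)).comp_sub_left a
    simpa using this
  have hsum : IntervalIntegrable (fun x : ℝ => (x ^ (-r) + (a - x) ^ (-r)) / r) volume 0 a := by
    exact (h1.add h2).div_const r
  have hIoc : IntegrableOn (fun x : ℝ => (x ^ (-r) + (a - x) ^ (-r)) / r) (Ioc 0 a) := by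
    rwa [intervalIntegrable_iff_integrableOn_Ioc_of_le ha.le] at hsum
  have hres : (volume : Measure ℝ).restrict (Ioo 0 a) = volume.restrict (Ioc 0 a) :=
    Measure.restrict_congr_set Ioo_ae_eq_Ioc
  have hval : ∫ x in (0:ℝ)..a, x ^ (-r) = a ^ (1 - r) / (1 - r) := by
    rw [integral_rpow (Or.inl (by linarith))]
    rw [Real.zero_rpow (by linarith : -r + 1 ≠ 0)]
    rw [show -r + 1 = 1 - r by ring]
    ring
  refine ⟨hIoc.mono_set Ioo_subset_Ioc_self, ?_⟩
  have : ∫ x in Ioo 0 a, (x ^ (-r) + (a - x) ^ (-r)) / r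
      = ∫ x in (0:ℝ)..a, (x ^ (-r) + (a - x) ^ (-r)) / r := by
    rw [intervalIntegral.integral_of_le ha.le, IntegrableOn] at *
    rw [hres]
  rw [this, intervalIntegral.integral_div, intervalIntegral.integral_add h1 h2, hval]
  have h4 : ∫ x in (0:ℝ)..a, (a - x) ^ (-r) = a ^ (1 - r) / (1 - r) := by
    have := intervalIntegral.integral_comp_sub_left (a := (0:ℝ)) (b := a)
      (fun x : ℝ => x ^ (-r)) a
    simpa [this] using hval
  rw [h4]; field_simp; ring

theorem stmt0 (a s : ℝ) (ha : 0 < a) (hs : s ∈ Set.Ioo (0 : ℝ) (1/2)) :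
    Integrable (fun p : ℝ × ℝ =>
      |Set.indicator (Set.Icc (0:ℝ) a) (fun _ => (1:ℝ)) p.1
        - Set.indicator (Set.Icc (0:ℝ) a) (fun _ => (1:ℝ)) p.2| ^ 2
        / |p.1 - p.2| ^ (1 + 2*s)) ∧
    (∫ x : ℝ, ∫ y : ℝ,
      |Set.indicator (Set.Icc (0:ℝ) a) (fun _ => (1:ℝ)) x
        - Set.indicator (Set.Icc (0:ℝ) a) (fun _ => (1:ℝ)) y| ^ 2
        / |x - y| ^ (1 + 2*s))
      = 2 * a ^ (1 - 2*s) / (s * (1 - 2*s)) := by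
  obtain ⟨hs0, hs12⟩ := hs
  set r : ℝ := 2 * s with hrdef
  have hr0 : 0 < r := by positivity
  have hr1 : r < 1 := by rw [hrdef]; linarith
  set I : Set ℝ := Icc (0:ℝ) a with hIdef
  set χ : ℝ → ℝ := Set.indicator I (fun _ => (1:ℝ)) with hχdef
  set F : ℝ → ℝ → ℝ := fun x y => |χ x - χ y| ^ 2 / |x - y| ^ (1 + r) with hFdef
  have hmeasI : MeasurableSet I := measurableSet_Icc
  -- basic pointwise facts
  have hχ_in : ∀ x ∈ I, χ x = 1 := fun x hx => indicator_of_mem hx _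
  have hχ_out : ∀ x ∉ I, χ x = 0 := fun x hx => indicator_of_notMem hx _
  have hF0 : ∀ x y, (x ∈ I ↔ y ∈ I) → F x y = 0 := by
    intro x y hxy
    have : χ x = χ y := by
      by_cases hx : x ∈ I
      · rw [hχ_in x hx, hχ_in y (hxy.1 hx)]
      · rw [hχ_out x hx, hχ_out y (fun hy => hx (hxy.2 hy))]
    simp [hFdef, this]
  have hF1 : ∀ x y, x ∈ I → y ∉ I → F x y = |x - y| ^ (-(1+r)) := by
    intro x y hx hy
    simp only [hFdef, hχ_in x hx, hχ_out y hy]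
    rw [Real.rpow_neg (abs_nonneg _)]
    norm_num
  have hFsymm : ∀ x y, F x y = F y x := by
    intro x y
    simp only [hFdef, abs_sub_comm (χ x), abs_sub_comm x y]
  have hFnonneg : ∀ x y, 0 ≤ F x y := fun x y =>
    div_nonneg (pow_nonneg (abs_nonneg _) 2) (rpow_nonneg (abs_nonneg _) _)
  -- measurability
  have hχm : Measurable χ := measurable_const.indicator hmeasI
  have hFm : Measurable (fun p : ℝ × ℝ => F p.1 p.2) := by
    apply Measurable.div
    · exact (((hχm.comp measurable_fst).sub (hχm.comp measurable_snd)).abs).pow_const 2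
    · exact (Real.continuous_rpow_const (by linarith : (0:ℝ) ≤ 1 + r)).measurable.comp
        ((measurable_fst.sub measurable_snd).abs)
  -- the key lintegral
  set k : ℝ → ℝ → ℝ≥0∞ := fun x y => ENNReal.ofReal (F x y) with hkdef
  have hkm : Measurable (fun p : ℝ × ℝ => k p.1 p.2) := hFm.ennreal_ofReal
  have hC : Iᶜ = Iio 0 ∪ Ioi a := by
    ext y
    simp only [hIdef, mem_compl_iff, Set.mem_Icc, not_and_or, not_le, mem_union, mem_Iio, mem_Ioi]
  have hinner : ∀ x ∈ Ioo 0 a, (∫⁻ y in Iᶜ, k x y)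
      = ENNReal.ofReal ((x ^ (-r) + (a - x) ^ (-r)) / r) := by
    intro x hx
    obtain ⟨hx0, hxa⟩ := hx
    have hxI : x ∈ I := ⟨hx0.le, hxa.le⟩
    rw [hC, lintegral_union measurableSet_Ioi
      (by rw [Set.disjoint_left]; intro y h1 h2; simp at h1 h2; linarith)]
    have e1 : (∫⁻ y in Iio 0, k x y) = ENNReal.ofReal (x ^ (-r) / r) := by
      have hcg : (∫⁻ y in Iio 0, k x y)
          = ∫⁻ y in Iio 0, ENNReal.ofReal ((x - y) ^ (-(1+r))) := by
        apply setLIntegral_congr_fun measurableSet_Iio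
        intro y hy
        have hyI : y ∉ I := by
          simp only [hIdef, Set.mem_Icc, not_and_or, not_le]; left; exact hy
        have habs : |x - y| = x - y := abs_of_pos (by simp at hy; linarith)
        rw [hkdef]; simp only []
        rw [hF1 x y hxI hyI, habs]
      rw [hcg, ← ofReal_integral_eq_lintegral_ofReal (aux_Iio hr0 hx0).1
        ((ae_restrict_iff' measurableSet_Iio).mpr (ae_of_all _ fun y hy =>
          rpow_nonneg (by simp at hy; linarith) _))]
      rw [(aux_Iio hr0 hx0).2, sub_zero]
    have e2 : (∫⁻ y in Ioi a, k x y) = ENNReal.ofReal ((a - x) ^ (-r) / r) := by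
      have hcg : (∫⁻ y in Ioi a, k x y)
          = ∫⁻ y in Ioi a, ENNReal.ofReal ((y - x) ^ (-(1+r))) := by
        apply setLIntegral_congr_fun measurableSet_Ioi
        intro y hy
        have hyI : y ∉ I := by
          simp only [hIdef, Set.mem_Icc, not_and_or, not_le]; right; exact hy
        have habs : |x - y| = y - x := by
          rw [abs_sub_comm]; exact abs_of_pos (by simp at hy; linarith)
        rw [hkdef]; simp only []
        rw [hF1 x y hxI hyI, habs]
      rw [hcg, ← ofReal_integral_eq_lintegral_ofReal (aux_Ioi hr0 hxa).1
        ((ae_restrict_iff' measurableSet_Ioi).mpr (ae_of_all _ fun y hy =>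
          rpow_nonneg (by simp at hy; linarith) _))]
      rw [(aux_Ioi hr0 hxa).2]
    rw [e1, e2, ← ENNReal.ofReal_add (div_nonneg (rpow_nonneg hx0.le _) hr0.le)
      (div_nonneg (rpow_nonneg (by linarith) _) hr0.le), add_div]
  have hT : (∫⁻ x in I, ∫⁻ y in Iᶜ, k x y)
      = ENNReal.ofReal (2 * a ^ (1 - r) / (r * (1 - r))) := by
    have hres : (volume : Measure ℝ).restrict I = volume.restrict (Ioo 0 a) :=
      (Measure.restrict_congr_set Ioo_ae_eq_Icc).symm
    rw [show (∫⁻ x in I, ∫⁻ y in Iᶜ, k x y) = ∫⁻ x in Ioo 0 a, ∫⁻ y in Iᶜ, k x y by rw [hres]]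
    rw [setLIntegral_congr_fun measurableSet_Ioo (fun x hx => hinner x hx)]
    rw [← ofReal_integral_eq_lintegral_ofReal (aux_Ioo hr0 hr1 ha).1
      ((ae_restrict_iff' measurableSet_Ioo).mpr (ae_of_all _ fun x hx =>
        div_nonneg (add_nonneg (rpow_nonneg hx.1.le _)
          (rpow_nonneg (by linarith [hx.2]) _)) hr0.le))]
    rw [(aux_Ioo hr0 hr1 ha).2]
  have hL : (∫⁻ p : ℝ × ℝ, ENNReal.ofReal (F p.1 p.2) ∂(volume.prod volume))
      = ENNReal.ofReal (2 * a ^ (1 - 2*s) / (s * (1 - 2*s))) := by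
    have hsplit : ∀ x : ℝ, (∫⁻ y, k x y) = (∫⁻ y in I, k x y) + ∫⁻ y in Iᶜ, k x y :=
      fun x => (lintegral_add_compl _ hmeasI).symm
    have hz_in : ∀ x ∈ I, (∫⁻ y in I, k x y) = 0 := by
      intro x hx
      have : (∫⁻ y in I, k x y) = ∫⁻ _ in I, (0:ℝ≥0∞) :=
        setLIntegral_congr_fun hmeasI (fun y hy => by
          rw [hkdef]; simp only []
          rw [hF0 x y (iff_of_true hx hy), ENNReal.ofReal_zero])
      rw [this, lintegral_zero]
    have hz_out : ∀ x ∈ Iᶜ, (∫⁻ y in Iᶜ, k x y) = 0 := by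
      intro x hx
      have : (∫⁻ y in Iᶜ, k x y) = ∫⁻ _ in Iᶜ, (0:ℝ≥0∞) :=
        setLIntegral_congr_fun hmeasI.compl (fun y hy => by
          rw [hkdef]; simp only []
          rw [hF0 x y (iff_of_false hx hy), ENNReal.ofReal_zero])
      rw [this, lintegral_zero]
    calc (∫⁻ p : ℝ × ℝ, ENNReal.ofReal (F p.1 p.2) ∂(volume.prod volume))
        = ∫⁻ x, ∫⁻ y, k x y := lintegral_prod _ hkm.aemeasurable
      _ = (∫⁻ x in I, ∫⁻ y, k x y) + ∫⁻ x in Iᶜ, ∫⁻ y, k x y :=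
          (lintegral_add_compl _ hmeasI).symm
      _ = (∫⁻ x in I, ∫⁻ y in Iᶜ, k x y) + ∫⁻ x in Iᶜ, ∫⁻ y in I, k x y := by
          congr 1
          · apply setLIntegral_congr_fun hmeasI
            intro x hx
            dsimp only
            rw [hsplit x, hz_in x hx, zero_add]
          · apply setLIntegral_congr_fun hmeasI.compl
            intro x hx
            dsimp only
            rw [hsplit x, hz_out x hx, add_zero]
      _ = (∫⁻ x in I, ∫⁻ y in Iᶜ, k x y) + ∫⁻ y in I, ∫⁻ x in Iᶜ, k x y := by
          congr 1
          exact lintegral_lintegral_swap hkm.aemeasurable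
      _ = (∫⁻ x in I, ∫⁻ y in Iᶜ, k x y) + ∫⁻ x in I, ∫⁻ y in Iᶜ, k x y := by
          congr 1
          apply lintegral_congr; intro x
          apply lintegral_congr; intro y
          rw [hkdef]; simp only []; rw [hFsymm]
      _ = ENNReal.ofReal (2 * a ^ (1 - 2*s) / (s * (1 - 2*s))) := by
          rw [hT, ← ENNReal.ofReal_add (div_nonneg (by positivity) (mul_pos hr0 (by linarith)).le) (div_nonneg (by positivity) (mul_pos hr0 (by linarith)).le)]
          congr 1
          rw [hrdef]
          have h1 : s ≠ 0 := hs0.ne'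
          have h2 : (1 - 2*s) ≠ 0 := ne_of_gt (by linarith)
          field_simp
          ring
  have hnn_ae : 0 ≤ᵐ[volume.prod volume] fun p : ℝ × ℝ => F p.1 p.2 :=
    ae_of_all _ fun p => hFnonneg _ _
  have hInt : Integrable (fun p : ℝ × ℝ => F p.1 p.2) (volume.prod volume) := by
    refine ⟨hFm.aestronglyMeasurable, ?_⟩
    rw [hasFiniteIntegral_iff_ofReal hnn_ae, hL]
    exact ENNReal.ofReal_lt_top
  have hCnn : 0 ≤ 2 * a ^ (1 - 2*s) / (s * (1 - 2*s)) :=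
    div_nonneg (by positivity) (mul_nonneg hs0.le (by linarith))
  constructor
  · show Integrable (fun p : ℝ × ℝ => F p.1 p.2) volume
    rw [MeasureTheory.Measure.volume_eq_prod ℝ ℝ]
    exact hInt
  · show (∫ x, ∫ y, F x y) = _
    rw [MeasureTheory.integral_integral hInt]
    rw [integral_eq_lintegral_of_nonneg_ae hnn_ae hFm.aestronglyMeasurable]
    rw [hL]
    exact ENNReal.toReal_ofReal hCnn
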